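/- Let A, B ⊆ Ω be measurable and let (u_A, y_A, p_A) and (u_B, y_B, p_B) be solutions of (P_A) and (P_B). Then J(u_A,A) − J(u_B,B) + ½‖y_B − y_A‖_Y² = ∫_Ω ( g(u_A) − g(u_B) + χ_A·p_A·(u_A − u_B) + (χ_A − χ_B)·(β + p_A·u_B) ) dx. -/

import Mathlib

open MeasureTheory ENNReal Set Filter Metric Topology
open scoped Classical symmDiff NNReal

noncomputable section

namespace L0Control

variable {α : Type*} [MeasurableSpace α]

/-- The characteristic function `χ_A` of a set `A`, as a real-valued function. -/
def chi (A : Set α) (x : α) : ℝ := A.indicator (fun _ => (1 : ℝ)) x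

/-- Pointwise multiplication of `u ∈ L²(μ)` by the characteristic function of `A`,
as an element of `L²(μ)` (junk value `0` if `A` is not measurable). -/
def chiMul {μ : Measure α} (A : Set α) (u : Lp ℝ 2 μ) : Lp ℝ 2 μ :=
  if hA : MeasurableSet A then
    MemLp.toLp (A.indicator (u : α → ℝ)) ((Lp.memLp u).indicator hA)
  else 0

variable {Y : Type*} [NormedAddCommGroup Y] [InnerProductSpace ℝ Y]

/-- The objective functional
`J(u, A) = ½‖S(χ_A u) − y_d‖² + ∫_Ω (g(u(x)) + χ_A(x) β(x)) dx`,
with values in `EReal` (the `g`-part may be `+∞`). -/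
def Jfun {μ : Measure α} (S : Lp ℝ 2 μ →L[ℝ] Y) (yd : Y) (g : ℝ → ℝ≥0∞) (β : α → ℝ)
    (u : Lp ℝ 2 μ) (A : Set α) : EReal :=
  ((2⁻¹ * ‖S (chiMul A u) - yd‖ ^ 2 + ∫ x in A, β x ∂μ : ℝ) : EReal)
    + ((∫⁻ x, g (u x) ∂μ : ℝ≥0∞) : EReal)

/-- `u` minimizes `J(·, A)` over `L²(μ)`. -/
def IsMinimizer {μ : Measure α} (S : Lp ℝ 2 μ →L[ℝ] Y) (yd : Y) (g : ℝ → ℝ≥0∞) (β : α → ℝ)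
    (A : Set α) (u : Lp ℝ 2 μ) : Prop :=
  ∀ v : Lp ℝ 2 μ, Jfun S yd g β u A ≤ Jfun S yd g β v A

/-- `(u, y, p)` is a solution triple of the problem `(P_A)`:
`u` minimizes `J(·, A)`, `y = S(χ_A u)` is the state and `p = S*(y − y_d)` the adjoint state. -/
def IsSolution {μ : Measure α} [CompleteSpace Y] (S : Lp ℝ 2 μ →L[ℝ] Y) (yd : Y)
    (g : ℝ → ℝ≥0∞) (β : α → ℝ) (A : Set α) (u : Lp ℝ 2 μ) (y : Y) (p : Lp ℝ 2 μ) : Prop :=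
  IsMinimizer S yd g β A u ∧ y = S (chiMul A u) ∧
    p = ContinuousLinearMap.adjoint S (y - yd)

/-- The value function `J(A) = inf_{u ∈ L²} J(u, A)`. -/
def Jval {μ : Measure α} (S : Lp ℝ 2 μ →L[ℝ] Y) (yd : Y) (g : ℝ → ℝ≥0∞) (β : α → ℝ)
    (A : Set α) : EReal :=
  ⨅ u : Lp ℝ 2 μ, Jfun S yd g β u A

/-- `H̄(p) = min_{u ∈ ℝ} (p·u + g(u)) = −g*(−p)`, with values in `EReal`. -/
def Hbar (g : ℝ → ℝ≥0∞) (p : ℝ) : EReal :=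
  ⨅ u : ℝ, ((p * u : ℝ) : EReal) + (g u : EReal)

/-- `H̄(p)` as a real number (it is finite under the standing assumptions). -/
def HbarR (g : ℝ → ℝ≥0∞) (p : ℝ) : ℝ := (Hbar g p).toReal

/-- Absolute value on `EReal`. -/
def eabs (x : EReal) : EReal := max x (-x)

end L0Control

open L0Control


section AuxLemmas

open L0Control

private lemma ennreal_coe_fin' {x : ℝ≥0∞} (hx : x ≠ ⊤) : (x : EReal) = ((x.toReal : ℝ) : EReal) := by
  conv_lhs => rw [← ENNReal.ofReal_toReal hx]
  rw [EReal.coe_ennreal_ofReal, max_eq_left ENNReal.toReal_nonneg]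

private lemma indicator_eq_chi_mul' {α : Type*} (A : Set α) (f : α → ℝ) (x : α) :
    A.indicator f x = chi A x * f x := by
  by_cases h : x ∈ A <;> simp [chi, Set.indicator_of_mem, Set.indicator_of_notMem, h]

private lemma chiMul_coeFn' {α : Type*} [MeasurableSpace α] {μ : MeasureTheory.Measure α}
    {A : Set α} (hA : MeasurableSet A) (u : Lp ℝ 2 μ) :
    chiMul A u =ᵐ[μ] A.indicator ⇑u := by
  rw [chiMul, dif_pos hA]
  exact MemLp.coeFn_toLp _

private lemma lintegral_g_ne_top' {α : Type*} [MeasurableSpace α] {μ : MeasureTheory.Measure α}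
    {Y : Type*} [NormedAddCommGroup Y] [InnerProductSpace ℝ Y]
    (S : Lp ℝ 2 μ →L[ℝ] Y) (yd : Y) (g : ℝ → ℝ≥0∞)
    (β : α → ℝ) (hg0 : g 0 = 0) (C : Set α) (u : Lp ℝ 2 μ)
    (hmin : IsMinimizer S yd g β C u) : ∫⁻ x, g (u x) ∂μ ≠ ⊤ := by
  intro htop
  have hz : ∫⁻ x, g ((0 : Lp ℝ 2 μ) x) ∂μ = 0 := by
    have h1 : ∫⁻ x, g ((0 : Lp ℝ 2 μ) x) ∂μ = ∫⁻ _, g 0 ∂μ := by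
      apply lintegral_congr_ae
      filter_upwards [Lp.coeFn_zero ℝ 2 μ] with x hx
      rw [hx]; simp
    rw [h1]; simp [hg0]
  have h0 : Jfun S yd g β (0 : Lp ℝ 2 μ) C
      = ((2⁻¹ * ‖S (chiMul C 0) - yd‖ ^ 2 + ∫ x in C, β x ∂μ : ℝ) : EReal) := by
    rw [Jfun, hz]; simp
  have h := hmin 0
  rw [h0] at h
  have htop' : Jfun S yd g β u C = ⊤ := by
    rw [Jfun, htop, EReal.coe_ennreal_top, EReal.coe_add_top]
  rw [htop'] at h
  exact (EReal.coe_lt_top _).not_ge h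

end AuxLemmas

set_option maxHeartbeats 1000000 in
/-- Exact expansion of the difference of objective values:
`J(u_A,A) − J(u_B,B) + ½‖y_B − y_A‖² =
  ∫_Ω (g(u_A) − g(u_B) + χ_A p_A (u_A − u_B) + (χ_A − χ_B)(β + p_A u_B)) dx`. -/
theorem expansion_of_objective_difference
    {d : ℕ} {Ω : Set (EuclideanSpace ℝ (Fin d))}
    (hΩm : MeasurableSet Ω) (hΩfin : volume Ω < ⊤)
    {Y : Type*} [NormedAddCommGroup Y] [InnerProductSpace ℝ Y] [CompleteSpace Y]
    (S : Lp ℝ 2 (volume.restrict Ω) →L[ℝ] Y) (yd : Y)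
    (g : ℝ → ℝ≥0∞)
    (hg_proper : ∃ u : ℝ, g u ≠ ⊤)
    (hg_lsc : LowerSemicontinuous g)
    (hg_zero : ∀ u : ℝ, g u = 0 ↔ u = 0)
    (β : EuclideanSpace ℝ (Fin d) → ℝ)
    (hβ : Integrable β (volume.restrict Ω))
    (hg_conv : ∀ u v l : ℝ, l ∈ Set.Ioo (0 : ℝ) 1 →
      g (l * u + (1 - l) * v) ≤ ENNReal.ofReal l * g u + ENNReal.ofReal (1 - l) * g v)
    (A : Set (EuclideanSpace ℝ (Fin d))) (hAm : MeasurableSet A) (hAΩ : A ⊆ Ω)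
    (B : Set (EuclideanSpace ℝ (Fin d))) (hBm : MeasurableSet B) (hBΩ : B ⊆ Ω)
    (uA : Lp ℝ 2 (volume.restrict Ω)) (yA : Y) (pA : Lp ℝ 2 (volume.restrict Ω))
    (hsolA : IsSolution S yd g β A uA yA pA)
    (uB : Lp ℝ 2 (volume.restrict Ω)) (yB : Y) (pB : Lp ℝ 2 (volume.restrict Ω))
    (hsolB : IsSolution S yd g β B uB yB pB)
    :
    Jfun S yd g β uA A - Jfun S yd g β uB B + ((2⁻¹ * ‖yB - yA‖ ^ 2 : ℝ) : EReal)
      = ((∫⁻ x, g (uA x) ∂(volume.restrict Ω) : ℝ≥0∞) : EReal)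
          - ((∫⁻ x, g (uB x) ∂(volume.restrict Ω) : ℝ≥0∞) : EReal)
          + ((∫ x, (chi A x * pA x * (uA x - uB x)
              + (chi A x - chi B x) * (β x + pA x * uB x)) ∂(volume.restrict Ω) : ℝ) : EReal) := by
  obtain ⟨hminA, hyA, hpA⟩ := hsolA
  obtain ⟨hminB, hyB, hpB⟩ := hsolB
  have hg0 : g 0 = 0 := (hg_zero 0).mpr rfl
  have hLA : ∫⁻ x, g (uA x) ∂(volume.restrict Ω) ≠ ⊤ := lintegral_g_ne_top' S yd g β hg0 A uA hminA
  have hLB : ∫⁻ x, g (uB x) ∂(volume.restrict Ω) ≠ ⊤ := lintegral_g_ne_top' S yd g β hg0 B uB hminB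
  set GA := (∫⁻ x, g (uA x) ∂(volume.restrict Ω)).toReal with hGA
  set GB := (∫⁻ x, g (uB x) ∂(volume.restrict Ω)).toReal with hGB
  set rA : ℝ := 2⁻¹ * ‖S (chiMul A uA) - yd‖ ^ 2 + ∫ x in A, β x ∂(volume.restrict Ω) with hrA
  set rB : ℝ := 2⁻¹ * ‖S (chiMul B uB) - yd‖ ^ 2 + ∫ x in B, β x ∂(volume.restrict Ω) with hrB
  set I : ℝ := ∫ x, (chi A x * pA x * (uA x - uB x)
      + (chi A x - chi B x) * (β x + pA x * uB x)) ∂(volume.restrict Ω) with hI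
  have hJA : Jfun S yd g β uA A = ((rA + GA : ℝ) : EReal) := by
    rw [Jfun, ennreal_coe_fin' hLA, ← EReal.coe_add]
  have hJB : Jfun S yd g β uB B = ((rB + GB : ℝ) : EReal) := by
    rw [Jfun, ennreal_coe_fin' hLB, ← EReal.coe_add]
  rw [hJA, hJB, ennreal_coe_fin' hLA, ennreal_coe_fin' hLB,
    ← EReal.coe_sub, ← EReal.coe_add, ← EReal.coe_sub, ← EReal.coe_add,
    EReal.coe_eq_coe_iff]
  -- now a real identity; reduce to the key identity
  suffices key : rA - rB + 2⁻¹ * ‖yB - yA‖ ^ 2 = I by linarith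
  -- key identity
  obtain ⟨f1, hf1⟩ : ∃ f : EuclideanSpace ℝ (Fin d) → ℝ,
      f = fun x => pA x * (A.indicator (⇑uA) x - B.indicator (⇑uB) x) := ⟨_, rfl⟩
  obtain ⟨f2, hf2⟩ : ∃ f : EuclideanSpace ℝ (Fin d) → ℝ,
      f = fun x => A.indicator β x - B.indicator β x := ⟨_, rfl⟩
  have hf1int : Integrable f1 (volume.restrict Ω) := by
    have h := L2.integrable_inner (𝕜 := ℝ) pA (chiMul A uA - chiMul B uB)
    apply h.congr
    filter_upwards [Lp.coeFn_sub (chiMul A uA) (chiMul B uB),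
      chiMul_coeFn' hAm uA, chiMul_coeFn' hBm uB] with x h1 h2 h3
    simp only [hf1, RCLike.inner_apply, starRingEnd_apply, star_trivial]
    rw [h1, Pi.sub_apply, h2, h3, mul_comm]
  have hf2int : Integrable f2 (volume.restrict Ω) := by
    rw [hf2]; exact (hβ.indicator hAm).sub (hβ.indicator hBm)
  have hquad : 2⁻¹ * ‖yA - yd‖ ^ 2 - 2⁻¹ * ‖yB - yd‖ ^ 2 + 2⁻¹ * ‖yB - yA‖ ^ 2
      = inner ℝ (yA - yd) ((yA - yd) - (yB - yd)) := by
    have h1 : ‖(yB - yd) - (yA - yd)‖ ^ 2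
        = ‖yB - yd‖ ^ 2 - 2 * inner ℝ (yB - yd) (yA - yd) + ‖yA - yd‖ ^ 2 :=
      norm_sub_sq_real (yB - yd) (yA - yd)
    have h2 : (inner ℝ (yA - yd) ((yA - yd) - (yB - yd)) : ℝ)
        = inner ℝ (yA - yd) (yA - yd) - inner ℝ (yA - yd) (yB - yd) :=
      inner_sub_right _ _ _
    have h3 : (inner ℝ (yA - yd) (yA - yd) : ℝ) = ‖yA - yd‖ ^ 2 :=
      real_inner_self_eq_norm_sq _
    have h4 : (inner ℝ (yB - yd) (yA - yd) : ℝ) = inner ℝ (yA - yd) (yB - yd) :=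
      real_inner_comm _ _
    have h5 : yB - yA = (yB - yd) - (yA - yd) := by abel
    rw [h5]
    linarith
  have hsub : (yA - yd) - (yB - yd) = S (chiMul A uA - chiMul B uB) := by
    rw [hyA, hyB, map_sub]; abel
  have hinner : (inner ℝ (yA - yd) ((yA - yd) - (yB - yd)) : ℝ)
      = ∫ x, f1 x ∂(volume.restrict Ω) := by
    rw [hsub, ← ContinuousLinearMap.adjoint_inner_left, ← hpA, L2.inner_def]
    apply integral_congr_ae
    filter_upwards [Lp.coeFn_sub (chiMul A uA) (chiMul B uB),
      chiMul_coeFn' hAm uA, chiMul_coeFn' hBm uB] with x h1 h2 h3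
    simp only [hf1, RCLike.inner_apply, starRingEnd_apply, star_trivial]
    rw [h1, Pi.sub_apply, h2, h3, mul_comm]
  have hβint : (∫ x in A, β x ∂(volume.restrict Ω)) - (∫ x in B, β x ∂(volume.restrict Ω))
      = ∫ x, f2 x ∂(volume.restrict Ω) := by
    rw [hf2, integral_sub (hβ.indicator hAm) (hβ.indicator hBm),
      integral_indicator hAm, integral_indicator hBm]
  have hIsplit : I = (∫ x, f1 x ∂(volume.restrict Ω)) + ∫ x, f2 x ∂(volume.restrict Ω) := by
    rw [hI, ← integral_add hf1int hf2int]
    apply integral_congr_ae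
    apply Filter.Eventually.of_forall
    intro x
    simp only [hf1, hf2, indicator_eq_chi_mul', Pi.add_apply]
    ring
  rw [hrA, hrB, ← hyA, ← hyB, hIsplit, ← hinner, ← hβint]
  linarith [hquad]
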